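/- Let X be a topological space, n ≥ 1, and let E₁, …, E_n ⊆ X. The smallest family of subsets of X containing E₁, …, E_n and closed under topological closure and set complement has at most 14·n elements. -/
import Mathlib


/-- The family of subsets of a topological space `X` generated from the sets `E 0, …, E (n-1)`
by successive applications of topological closure and set complement: the smallest collection
of subsets of `X` containing all the `E j` and closed under these operations. -/
inductive kcGen {X : Type*} [TopologicalSpace X] {n : ℕ} (E : Fin n → Set X) : Set X → Prop
  | base (j : Fin n) : kcGen E (E j)
  | closure {A : Set X} : kcGen E A → kcGen E (closure A)
  | compl {A : Set X} : kcGen E A → kcGen E Aᶜ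

lemma kc_cic {X : Type*} [TopologicalSpace X] (s : Set X) :
    closure (interior (closure (interior s))) = closure (interior s) := by
  apply Set.Subset.antisymm
  · simpa using closure_mono (interior_subset (s := closure (interior s)))
  · exact closure_mono (interior_maximal subset_closure isOpen_interior)

lemma kc_key {X : Type*} [TopologicalSpace X] (s : Set X) :
    closure ((closure ((closure ((closure s)ᶜ))ᶜ))ᶜ) = closure ((closure s)ᶜ) := by
  simp only [← interior_compl, ← closure_compl, compl_compl]
  exact kc_cic _

/-- The 14 Kuratowski words applied to a set `s`. -/
def kcWords {X : Type*} [TopologicalSpace X] (s : Set X) : Fin 14 → Set X :=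
  ![s, sᶜ, closure s, closure sᶜ, (closure s)ᶜ, (closure sᶜ)ᶜ,
    closure (closure s)ᶜ, closure (closure sᶜ)ᶜ,
    (closure (closure s)ᶜ)ᶜ, (closure (closure sᶜ)ᶜ)ᶜ,
    closure (closure (closure s)ᶜ)ᶜ, closure (closure (closure sᶜ)ᶜ)ᶜ,
    (closure (closure (closure s)ᶜ)ᶜ)ᶜ, (closure (closure (closure sᶜ)ᶜ)ᶜ)ᶜ]

lemma kcGen_mem_words {X : Type*} [TopologicalSpace X] {n : ℕ} {E : Fin n → Set X}
    {A : Set X} (h : kcGen E A) : ∃ j : Fin n, ∃ i : Fin 14, A = kcWords (E j) i := by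
  induction h with
  | base j => exact ⟨j, 0, rfl⟩
  | closure _ ih =>
    obtain ⟨j, i, rfl⟩ := ih
    refine ⟨j, ?_⟩
    set s := E j
    fin_cases i
    · exact ⟨2, show closure (s) = closure s from rfl⟩
    · exact ⟨3, show closure (sᶜ) = closure sᶜ from rfl⟩
    · exact ⟨2, show closure (closure s) = closure s from closure_closure⟩
    · exact ⟨3, show closure (closure sᶜ) = closure sᶜ from closure_closure⟩
    · exact ⟨6, show closure ((closure s)ᶜ) = closure (closure s)ᶜ from rfl⟩
    · exact ⟨7, show closure ((closure sᶜ)ᶜ) = closure (closure sᶜ)ᶜ from rfl⟩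
    · exact ⟨6, show closure (closure (closure s)ᶜ) = closure (closure s)ᶜ from closure_closure⟩
    · exact ⟨7, show closure (closure (closure sᶜ)ᶜ) = closure (closure sᶜ)ᶜ from closure_closure⟩
    · exact ⟨10, show closure ((closure (closure s)ᶜ)ᶜ) = closure (closure (closure s)ᶜ)ᶜ from rfl⟩
    · exact ⟨11, show closure ((closure (closure sᶜ)ᶜ)ᶜ) = closure (closure (closure sᶜ)ᶜ)ᶜ from rfl⟩
    · exact ⟨10, show closure (closure (closure (closure s)ᶜ)ᶜ) = closure (closure (closure s)ᶜ)ᶜ from closure_closure⟩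
    · exact ⟨11, show closure (closure (closure (closure sᶜ)ᶜ)ᶜ) = closure (closure (closure sᶜ)ᶜ)ᶜ from closure_closure⟩
    · exact ⟨6, show closure ((closure (closure (closure s)ᶜ)ᶜ)ᶜ) = closure (closure s)ᶜ from kc_key s⟩
    · exact ⟨7, show closure ((closure (closure (closure sᶜ)ᶜ)ᶜ)ᶜ) = closure (closure sᶜ)ᶜ from kc_key sᶜ⟩
  | compl _ ih =>
    obtain ⟨j, i, rfl⟩ := ih
    refine ⟨j, ?_⟩
    set s := E j
    fin_cases i
    · exact ⟨1, show (s)ᶜ = sᶜ from rfl⟩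
    · exact ⟨0, show (sᶜ)ᶜ = s from compl_compl _⟩
    · exact ⟨4, show (closure s)ᶜ = (closure s)ᶜ from rfl⟩
    · exact ⟨5, show (closure sᶜ)ᶜ = (closure sᶜ)ᶜ from rfl⟩
    · exact ⟨2, show ((closure s)ᶜ)ᶜ = closure s from compl_compl _⟩
    · exact ⟨3, show ((closure sᶜ)ᶜ)ᶜ = closure sᶜ from compl_compl _⟩
    · exact ⟨8, show (closure (closure s)ᶜ)ᶜ = (closure (closure s)ᶜ)ᶜ from rfl⟩
    · exact ⟨9, show (closure (closure sᶜ)ᶜ)ᶜ = (closure (closure sᶜ)ᶜ)ᶜ from rfl⟩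
    · exact ⟨6, show ((closure (closure s)ᶜ)ᶜ)ᶜ = closure (closure s)ᶜ from compl_compl _⟩
    · exact ⟨7, show ((closure (closure sᶜ)ᶜ)ᶜ)ᶜ = closure (closure sᶜ)ᶜ from compl_compl _⟩
    · exact ⟨12, show (closure (closure (closure s)ᶜ)ᶜ)ᶜ = (closure (closure (closure s)ᶜ)ᶜ)ᶜ from rfl⟩
    · exact ⟨13, show (closure (closure (closure sᶜ)ᶜ)ᶜ)ᶜ = (closure (closure (closure sᶜ)ᶜ)ᶜ)ᶜ from rfl⟩
    · exact ⟨10, show ((closure (closure (closure s)ᶜ)ᶜ)ᶜ)ᶜ = closure (closure (closure s)ᶜ)ᶜ from compl_compl _⟩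
    · exact ⟨11, show ((closure (closure (closure sᶜ)ᶜ)ᶜ)ᶜ)ᶜ = closure (closure (closure sᶜ)ᶜ)ᶜ from compl_compl _⟩

/-- For `n ≥ 1` subsets `E₁, …, E_n` of a topological space `X`, the smallest family of
subsets of `X` containing the `E j` and closed under closure and complement has at most
`14 * n` elements. -/
theorem closure_compl_generated_card {X : Type*} [TopologicalSpace X] {n : ℕ} (hn : 1 ≤ n)
    (E : Fin n → Set X) :
    {A : Set X | kcGen E A}.encard ≤ 14 * n := by
  have hsub : {A : Set X | kcGen E A} ⊆
      Set.range (fun p : Fin n × Fin 14 => kcWords (E p.1) p.2) := by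
    rintro A hA
    obtain ⟨j, i, rfl⟩ := kcGen_mem_words hA
    exact ⟨(j, i), rfl⟩
  calc {A : Set X | kcGen E A}.encard
      ≤ (Set.range (fun p : Fin n × Fin 14 => kcWords (E p.1) p.2)).encard :=
        Set.encard_mono hsub
    _ ≤ (Set.univ : Set (Fin n × Fin 14)).encard := by
        rw [← Set.image_univ]; exact Set.encard_image_le _ _
    _ = 14 * n := by
        rw [Set.encard_univ]
        simp [ENat.card_eq_coe_natCard]
        ring
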